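/- Let G₀ = G be a finite multigraph, and suppose S₁,...,S_t are removed successively with each S_i a κ_ε-bad set of G_{i−1}. Let 𝒥 be the set of indices i ≤ t such that S_i is in the same connected component as S_t within G \ G_t, and set S_𝒥 = ∪_{i∈𝒥} S_i. Then κ_ε · vol_G(S_𝒥) > e_G(S_𝒥, G \ S_𝒥). -/

import Mathlib

open Finset
open scoped Classical

-- `m x y` is the number of oriented edges (darts) from `x` to `y` in a multigraph;
-- a loop at `x` contributes two darts to `m x x`.

/-- Number of oriented edges from `X` to `Y`. -/
def eG {V : Type*} [DecidableEq V] (m : V → V → ℕ) (X Y : Finset V) : ℕ :=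
  ∑ x ∈ X, ∑ y ∈ Y, m x y

/-- Volume of `X` inside the subgraph induced on `A`. -/
def volOn {V : Type*} [DecidableEq V] (m : V → V → ℕ) (A X : Finset V) : ℕ :=
  eG m X A

/-- The subgraph induced on `X` is connected. -/
def ConnOn {V : Type*} [DecidableEq V] (m : V → V → ℕ) (X : Finset V) : Prop :=
  ∀ x ∈ X, ∀ y ∈ X,
    Relation.ReflTransGen (fun a b => a ∈ X ∧ b ∈ X ∧ 0 < m a b) x y

/-- `X` is a `κ`-bad set of the subgraph induced on `A`. -/
def BadSet {V : Type*} [DecidableEq V] (m : V → V → ℕ) (κ : ℝ) (A X : Finset V) : Prop :=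
  X ⊆ A ∧ X.Nonempty ∧ ConnOn m X ∧
    2 * (volOn m A X : ℝ) ≤ (volOn m A A : ℝ) ∧
    (eG m X (A \ X) : ℝ) < κ * (volOn m A X : ℝ)

/-- `X` is a strong `κ`-bad set of the subgraph induced on `A`. -/
def StrongBadSet {V : Type*} [DecidableEq V] (m : V → V → ℕ) (κ : ℝ) (A X : Finset V) : Prop :=
  BadSet m κ A X ∧ ConnOn m (A \ X)

/-- The set of `κ`-isolated vertices of the whole graph. -/
noncomputable def Isol {V : Type*} [Fintype V] [DecidableEq V] (m : V → V → ℕ) (κ : ℝ) :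
    Finset V :=
  univ.filter (fun v => ∃ X, BadSet m κ univ X ∧ v ∈ X)

/-- The set of strongly `κ`-isolated vertices of the whole graph. -/
noncomputable def IsolStrong {V : Type*} [Fintype V] [DecidableEq V] (m : V → V → ℕ) (κ : ℝ) :
    Finset V :=
  univ.filter (fun v => ∃ X, StrongBadSet m κ univ X ∧ v ∈ X)

/-- The subgraph induced on `A` is a `κ`-expander. -/
def IsExpanderOn {V : Type*} [DecidableEq V] (m : V → V → ℕ) (κ : ℝ) (A : Finset V) : Prop :=
  ∀ X ⊆ A, 2 * (volOn m A X : ℝ) ≤ (volOn m A A : ℝ) →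
    κ * (volOn m A X : ℝ) ≤ (eG m X (A \ X) : ℝ)

/-- with `S₁, …, S_t` removed successively (each `Sᵢ` a `κ_ε`-bad set of
`Gᵢ₋₁`), let `𝒥` be the set of indices `i ≤ t` such that `Sᵢ` lies in the same
connected component as `S_t` inside `G \ G_t`, and `S_𝒥 = ⋃_{i ∈ 𝒥} Sᵢ`.
Then `κ_ε · vol_G(S_𝒥) > e_G(S_𝒥, G \ S_𝒥)`.
(Indices are shifted: `S (i+1)` for `i < t` plays the role of `S_{i+1}`.) -/
theorem stmt5 {V : Type*} [Fintype V] [DecidableEq V]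
    (m : V → V → ℕ) (hsym : ∀ x y, m x y = m y x)
    (κε : ℝ) (hκε : 0 < κε)
    (t : ℕ) (ht : 0 < t) (S Gs : ℕ → Finset V)
    (hG : ∀ i, Gs i = Finset.univ \ (Finset.range i).biUnion (fun j => S (j + 1)))
    (hbad : ∀ i < t, BadSet m κε (Gs i) (S (i + 1)))
    (J : Finset ℕ) (hJsub : J ⊆ Finset.range t) (hJt : t - 1 ∈ J)
    (hJ : ∀ i < t, (i ∈ J ↔ ∃ x ∈ S (i + 1), ∃ y ∈ S t,
      Relation.ReflTransGen
        (fun a b => a ∈ Finset.univ \ Gs t ∧ b ∈ Finset.univ \ Gs t ∧ 0 < m a b) x y))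
    (SJ : Finset V) (hSJ : SJ = J.biUnion (fun i => S (i + 1))) :
    (eG m SJ (Finset.univ \ SJ) : ℝ) < κε * (volOn m Finset.univ SJ : ℝ) := by
  classical
  have hκ0 : (0:ℝ) ≤ κε := le_of_lt hκε
  have hGsub : ∀ i j, i ≤ j → Gs j ⊆ Gs i := by
    intro i j hij
    rw [hG i, hG j]
    exact Finset.sdiff_subset_sdiff (le_refl _)
      (Finset.biUnion_subset_biUnion_of_subset_left _ (Finset.range_subset_range.2 hij))
  have hSsub : ∀ i, i < t → S (i+1) ⊆ Gs i := fun i hi => (hbad i hi).1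
  have hSnotGt : ∀ i, i < t → ∀ x ∈ S (i+1), x ∉ Gs t := by
    intro i hi x hx
    rw [hG t]
    simp only [Finset.mem_sdiff, Finset.mem_univ, true_and, not_not]
    exact Finset.mem_biUnion.2 ⟨i, Finset.mem_range.2 hi, hx⟩
  have hGtmem : ∀ y : V, y ∉ Gs t → ∃ j, j < t ∧ y ∈ S (j+1) := by
    intro y hy
    rw [hG t] at hy
    simp only [Finset.mem_sdiff, Finset.mem_univ, true_and, not_not] at hy
    obtain ⟨j, hj, hyj⟩ := Finset.mem_biUnion.1 hy
    exact ⟨j, Finset.mem_range.1 hj, hyj⟩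
  have hdisj : ∀ i j, i < j → j < t → Disjoint (S (i+1)) (S (j+1)) := by
    intro i j hij hjt
    rw [Finset.disjoint_left]
    intro x hxi hxj
    have hx := hSsub j hjt hxj
    rw [hG j] at hx
    exact (Finset.mem_sdiff.1 hx).2 (Finset.mem_biUnion.2 ⟨i, Finset.mem_range.2 hij, hxi⟩)
  have hpd : (J : Set ℕ).PairwiseDisjoint (fun i => S (i+1)) := by
    intro i hi j hj hne
    have hit : i < t := Finset.mem_range.1 (hJsub hi)
    have hjt : j < t := Finset.mem_range.1 (hJsub hj)
    rcases lt_or_gt_of_ne hne with h | h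
    · exact hdisj i j h hjt
    · exact (hdisj j i h hit).symm
  have hkey : ∀ i ∈ J, ∀ x ∈ S (i+1), ∀ y, y ∉ SJ → 0 < m x y → y ∈ Gs t := by
    intro i hiJ x hx y hySJ hm
    by_contra hyG
    obtain ⟨j, hjt, hyj⟩ := hGtmem y hyG
    have hit : i < t := Finset.mem_range.1 (hJsub hiJ)
    obtain ⟨x₀, hx₀, b, hb, hpath⟩ := (hJ i hit).1 hiJ
    have hxD : x ∈ Finset.univ \ Gs t :=
      Finset.mem_sdiff.2 ⟨Finset.mem_univ x, hSnotGt i hit x hx⟩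
    have hyD : y ∈ Finset.univ \ Gs t :=
      Finset.mem_sdiff.2 ⟨Finset.mem_univ y, hyG⟩
    have hc : Relation.ReflTransGen
        (fun a b => a ∈ Finset.univ \ Gs t ∧ b ∈ Finset.univ \ Gs t ∧ 0 < m a b) x x₀ := by
      refine Relation.ReflTransGen.mono ?_ x x₀ (((hbad i hit).2.2.1) x hx x₀ hx₀)
      rintro a c ⟨ha, hcm, hmc⟩
      exact ⟨Finset.mem_sdiff.2 ⟨Finset.mem_univ a, hSnotGt i hit a ha⟩,
        Finset.mem_sdiff.2 ⟨Finset.mem_univ c, hSnotGt i hit c hcm⟩, hmc⟩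
    have hfull : Relation.ReflTransGen
        (fun a b => a ∈ Finset.univ \ Gs t ∧ b ∈ Finset.univ \ Gs t ∧ 0 < m a b) y b :=
      Relation.ReflTransGen.head ⟨hyD, hxD, by rw [hsym]; exact hm⟩ (hc.trans hpath)
    have hjJ : j ∈ J := (hJ j hjt).2 ⟨y, hyj, b, hb, hfull⟩
    exact hySJ (hSJ ▸ Finset.mem_biUnion.2 ⟨j, hjJ, hyj⟩)
  have hsum1 : eG m SJ (Finset.univ \ SJ)
      = ∑ i ∈ J, eG m (S (i+1)) (Finset.univ \ SJ) := by
    rw [hSJ]; exact Finset.sum_biUnion hpd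
  have hsum2 : volOn m Finset.univ SJ = ∑ i ∈ J, volOn m Finset.univ (S (i+1)) := by
    rw [hSJ]; exact Finset.sum_biUnion hpd
  have hstep : ∀ i ∈ J, (eG m (S (i+1)) (Finset.univ \ SJ) : ℝ)
      < κε * (volOn m Finset.univ (S (i+1)) : ℝ) := by
    intro i hiJ
    have hit : i < t := Finset.mem_range.1 (hJsub hiJ)
    have h1 : eG m (S (i+1)) (Finset.univ \ SJ) ≤ eG m (S (i+1)) (Gs i \ S (i+1)) := by
      refine Finset.sum_le_sum ?_
      intro x hx
      refine Finset.sum_le_sum_of_ne_zero ?_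
      intro y hy hne
      have hySJ : y ∉ SJ := (Finset.mem_sdiff.1 hy).2
      have hyGt : y ∈ Gs t := hkey i hiJ x hx y hySJ (Nat.pos_of_ne_zero hne)
      refine Finset.mem_sdiff.2 ⟨hGsub i t (le_of_lt hit) hyGt, ?_⟩
      intro hyS
      exact hySJ (hSJ ▸ Finset.mem_biUnion.2 ⟨i, hiJ, hyS⟩)
    have h2 := (hbad i hit).2.2.2.2
    have h3 : (volOn m (Gs i) (S (i+1)) : ℝ) ≤ (volOn m Finset.univ (S (i+1)) : ℝ) := by
      refine Nat.cast_le.2 (Finset.sum_le_sum ?_)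
      intro x _
      exact Finset.sum_le_sum_of_subset (Finset.subset_univ _)
    calc (eG m (S (i+1)) (Finset.univ \ SJ) : ℝ)
        ≤ (eG m (S (i+1)) (Gs i \ S (i+1)) : ℝ) := Nat.cast_le.2 h1
      _ < κε * (volOn m (Gs i) (S (i+1)) : ℝ) := h2
      _ ≤ κε * (volOn m Finset.univ (S (i+1)) : ℝ) := mul_le_mul_of_nonneg_left h3 hκ0
  have hJne : J.Nonempty := ⟨t - 1, hJt⟩
  calc (eG m SJ (Finset.univ \ SJ) : ℝ)
      = ∑ i ∈ J, (eG m (S (i+1)) (Finset.univ \ SJ) : ℝ) := by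
        rw [hsum1]; push_cast; ring
    _ < ∑ i ∈ J, κε * (volOn m Finset.univ (S (i+1)) : ℝ) :=
        Finset.sum_lt_sum_of_nonempty hJne hstep
    _ = κε * ∑ i ∈ J, (volOn m Finset.univ (S (i+1)) : ℝ) := by rw [Finset.mul_sum]
    _ = κε * (volOn m Finset.univ SJ : ℝ) := by rw [hsum2]; push_cast; ring
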